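/- For every pillowcase code σ there exists a nice closed curve γ in the punctured sphere ℙ whose pillowcase code σ(γ) is equivalent to σ (equal up to a cyclic shift of indices). -/

import Mathlib

open Real ContinuousMap

noncomputable section

abbrev E3 := EuclideanSpace ℝ (Fin 3)

def sphere2 : Set E3 := Metric.sphere 0 1

def eqPt (θ : ℝ) : E3 := (WithLp.equiv 2 _).symm ![Real.cos θ, Real.sin θ, 0]

lemma eqPt_mem_sphere2 (θ : ℝ) : eqPt θ ∈ sphere2 := by
  simp only [sphere2, mem_sphere_iff_norm, sub_zero, eqPt]
  rw [EuclideanSpace.norm_eq]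
  simp [Fin.sum_univ_three, WithLp.equiv_symm_apply, PiLp.toLp_apply]

def puncture (k : ℕ) (j : Fin k) : E3 := eqPt (2 * π * j / k)

def Pset (k : ℕ) : Set E3 := sphere2 \ Set.range (puncture k)

abbrev PSub (k : ℕ) := ↥(Pset k)

def equatorSet (k : ℕ) : Set E3 := {x ∈ Pset k | x 2 = 0}

def arcSide (k : ℕ) (j : Fin k) : Set E3 :=
  {x | ∃ θ : ℝ, 2 * π * j / k < θ ∧ θ < 2 * π * (j + 1) / k ∧ x = eqPt θ}

def hemi : Bool → Set E3
  | true => {x | 0 < x 2}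
  | false => {x | x 2 < 0}

structure IsNice (k : ℕ) (γ : C(Circle, PSub k)) (m : ℕ) (t : ℕ → ℝ) (σ : ℕ → Fin k) : Prop where
  m_pos : 1 ≤ m
  mono : StrictMono t
  t_periodic : ∀ i, t (i + 2 * m) = t i + 2 * π
  σ_periodic : ∀ i, σ (i + 2 * m) = σ i
  preimage : ∀ z : Circle, ((γ z : E3) ∈ equatorSet k) ↔ ∃ i, z = Circle.exp (t i)
  code : ∀ i, ((γ (Circle.exp (t i)) : PSub k) : E3) ∈ arcSide k (σ i)
  adjacent : ∀ i, σ i ≠ σ (i + 1)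
  alternate : ∃ b : Bool, ∀ i s, t i < s → s < t (i + 1) →
      ((γ (Circle.exp s) : PSub k) : E3) ∈ hemi (if Even i then b else !b)

def IsNullCurve {k : ℕ} (γ : C(Circle, PSub k)) : Prop :=
  ∃ x, γ.Homotopic (ContinuousMap.const Circle x)

def NullLoop {X : Type*} [TopologicalSpace X] {x : X} (p : Path x x) : Prop :=
  p.Homotopic (Path.refl x)

def arcPath {X : Type*} [TopologicalSpace X] (δ : C(Circle, X)) (a b : ℝ) :
    Path (δ (Circle.exp a)) (δ (Circle.exp b)) where
  toFun u := δ (Circle.exp (a + u * (b - a)))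
  continuous_toFun := by fun_prop
  source' := by simp
  target' := by
    have h : a + (1 : ℝ) * (b - a) = b := by ring
    simp [h]

def AdmissibleWith (k m : ℕ) (t : ℕ → ℝ) (σ : ℕ → Fin k)
    (γ δ : C(Circle, PSub k)) (s s' : ℕ → ℝ) : Prop :=
  (∀ i, s i ≤ s' i) ∧
  (∀ i, s' i < s (i + 1)) ∧
  (∀ i, s (i + 2 * m) = s i + 2 * π) ∧
  (∀ i, s' (i + 2 * m) = s' i + 2 * π) ∧
  (∀ i, ((δ (Circle.exp (s i)) : PSub k) : E3) ∈ arcSide k (σ i) ∧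
        ((δ (Circle.exp (s' i)) : PSub k) : E3) ∈ arcSide k (σ i)) ∧
  (∀ i, ∃ q : Path (δ (Circle.exp (s' i))) (δ (Circle.exp (s i))),
      (∀ u, ((q u : PSub k) : E3) ∈ arcSide k (σ i)) ∧
      NullLoop ((arcPath δ (s i) (s' i)).trans q)) ∧
  (∀ i, ∃ q₁ : Path (γ (Circle.exp (t (i + 1)))) (δ (Circle.exp (s (i + 1)))),
        ∃ q₂ : Path (δ (Circle.exp (s' i))) (γ (Circle.exp (t i))),
      (∀ u, ((q₁ u : PSub k) : E3) ∈ arcSide k (σ (i + 1))) ∧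
      (∀ u, ((q₂ u : PSub k) : E3) ∈ arcSide k (σ i)) ∧
      NullLoop ((arcPath γ (t i) (t (i + 1))).trans
        (q₁.trans (((arcPath δ (s' i) (s (i + 1))).symm).trans q₂))))

def Admissible (k m : ℕ) (t : ℕ → ℝ) (σ : ℕ → Fin k) (γ δ : C(Circle, PSub k)) : Prop :=
  ∃ s s' : ℕ → ℝ, AdmissibleWith k m t σ γ δ s s'


/-- A pillowcase code: a (periodically extended) sequence of even length `2n ≥ 2` with
entries in `Fin k` such that cyclically adjacent entries differ. -/
structure PillowCode (k : ℕ) where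
  n : ℕ
  σ : ℕ → Fin k
  n_pos : 1 ≤ n
  periodic : ∀ i, σ (i + 2 * n) = σ i
  adjacent : ∀ i, σ i ≠ σ (i + 1)

/-- Equivalence of pillowcase codes: same length and equal up to a cyclic shift. -/
def CodeRel (k : ℕ) (c c' : PillowCode k) : Prop :=
  c.n = c'.n ∧ ∃ j, ∀ i, c'.σ i = c.σ (i + j)

/-- Free homotopy of (non-nullhomotopic) closed curves. -/
def LoopRel (k : ℕ) (γ δ : {f : C(Circle, PSub k) // ¬ IsNullCurve f}) : Prop :=
  γ.1.Homotopic δ.1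




/-! ### Auxiliary constructions -/


/-- Piecewise linear interpolation of an integer-indexed sequence. -/
def interpFn (θ : ℤ → ℝ) (x : ℝ) : ℝ := θ ⌊x⌋ + (θ (⌊x⌋ + 1) - θ ⌊x⌋) * Int.fract x

lemma interpFn_intCast (θ : ℤ → ℝ) (m : ℤ) : interpFn θ (m : ℝ) = θ m := by
  simp [interpFn]

/-- affine piece -/
def affFn (θ : ℤ → ℝ) (m : ℤ) (y : ℝ) : ℝ := θ m + (θ (m + 1) - θ m) * (y - m)

lemma interpFn_eq_affFn (θ : ℤ → ℝ) (m : ℤ) {y : ℝ} (h1 : (m : ℝ) ≤ y) (h2 : y < m + 1) :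
    interpFn θ y = affFn θ m y := by
  have hf : ⌊y⌋ = m := by
    rw [Int.floor_eq_iff]
    constructor
    · exact h1
    · exact_mod_cast h2
  rw [interpFn, affFn, hf, Int.fract, hf]

lemma continuous_affFn (θ : ℤ → ℝ) (m : ℤ) : Continuous (affFn θ m) := by
  unfold affFn; fun_prop

lemma continuous_interpFn (θ : ℤ → ℝ) : Continuous (interpFn θ) := by
  rw [continuous_iff_continuousAt]
  intro x
  apply continuousAt_iff_continuous_left'_right'.2
  constructor
  · -- left
    rcases eq_or_ne ((⌊x⌋ : ℝ)) x with hx | hx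
    · -- integer case, use piece m - 1
      set m : ℤ := ⌊x⌋ with hm
      apply ((continuous_affFn θ (m - 1)).continuousAt.continuousWithinAt).congr_of_eventuallyEq
      · have hmem : Set.Ioo (x - 1) x ∈ nhdsWithin x (Set.Iio x) :=
          Ioo_mem_nhdsLT_of_mem ⟨by linarith, le_refl x⟩
        filter_upwards [hmem] with y hy
        have h1 : ((m - 1 : ℤ) : ℝ) ≤ y := by push_cast; rw [hx] at *; linarith [hy.1]
        have h2 : y < (m - 1 : ℤ) + 1 := by push_cast; rw [hx] at *; linarith [hy.2]
        exact interpFn_eq_affFn θ (m - 1) h1 h2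
      · have hx' : interpFn θ x = θ m := by rw [← hx, interpFn_intCast]
        rw [hx', affFn]
        have : (x - ((m - 1 : ℤ) : ℝ)) = 1 := by push_cast; rw [← hx]; ring
        rw [this]
        have : (m - 1 + 1 : ℤ) = m := by ring
        rw [this]; ring
    · -- non-integer: floor is < x
      set m : ℤ := ⌊x⌋ with hm
      apply ((continuous_affFn θ m).continuousAt.continuousWithinAt).congr_of_eventuallyEq
      · have hlt : (m : ℝ) < x := lt_of_le_of_ne (Int.floor_le x) hx
        have hmem : Set.Ioo ((m : ℝ)) x ∈ nhdsWithin x (Set.Iio x) :=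
          Ioo_mem_nhdsLT_of_mem ⟨hlt, le_refl x⟩
        filter_upwards [hmem] with y hy
        exact interpFn_eq_affFn θ m (le_of_lt hy.1) (lt_trans hy.2 (by exact_mod_cast Int.lt_floor_add_one x))
      · exact interpFn_eq_affFn θ m (Int.floor_le x) (by exact_mod_cast Int.lt_floor_add_one x)
  · -- right
    set m : ℤ := ⌊x⌋ with hm
    apply ((continuous_affFn θ m).continuousAt.continuousWithinAt).congr_of_eventuallyEq
    · have hmem : Set.Ioo x ((m : ℝ) + 1) ∈ nhdsWithin x (Set.Ioi x) :=
        Ioo_mem_nhdsGT_of_mem ⟨le_refl x, by exact_mod_cast Int.lt_floor_add_one x⟩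
      filter_upwards [hmem] with y hy
      have h1 : (m : ℝ) ≤ y := le_of_lt (lt_of_le_of_lt (Int.floor_le x) hy.1)
      exact interpFn_eq_affFn θ m h1 (by exact_mod_cast hy.2)
    · exact interpFn_eq_affFn θ m (Int.floor_le x) (by exact_mod_cast Int.lt_floor_add_one x)

section Construction

variable {k : ℕ} (c : PillowCode k)

lemma eqPt_apply (θ : ℝ) : (eqPt θ 0 = Real.cos θ) ∧ (eqPt θ 1 = Real.sin θ) ∧ (eqPt θ 2 = 0) := by
  refine ⟨?_, ?_, ?_⟩ <;> simp [eqPt, WithLp.equiv_symm_apply, PiLp.toLp_apply]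

lemma eqPt_inj {α β : ℝ} (h : eqPt α = eqPt β) : ∃ l : ℤ, α - β = 2 * π * l := by
  have h0 : Real.cos α = Real.cos β := by
    have := congrArg (fun x : E3 => x 0) h
    simpa [(eqPt_apply α).1, (eqPt_apply β).1] using this
  have h1 : Real.sin α = Real.sin β := by
    have := congrArg (fun x : E3 => x 1) h
    simpa [(eqPt_apply α).2.1, (eqPt_apply β).2.1] using this
  exact Real.Angle.angle_eq_iff_two_pi_dvd_sub.1 (Real.Angle.cos_sin_inj h0 h1)

/-- Integer-indexed code. -/
def sigZ (m : ℤ) : Fin k := c.σ (m % ((2 * c.n : ℕ) : ℤ)).toNat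

lemma sigZ_add (m : ℤ) : sigZ c (m + (2 * c.n : ℕ)) = sigZ c m := by
  unfold sigZ
  have : (m + ((2 * c.n : ℕ) : ℤ)) % ((2 * c.n : ℕ) : ℤ) = m % ((2 * c.n : ℕ) : ℤ) := by
    conv_lhs => rw [show m + ((2 * c.n : ℕ) : ℤ) = m + ((2 * c.n : ℕ) : ℤ) * 1 by ring]
    exact Int.add_mul_emod_self_left _ _ _
  rw [this]

lemma sigma_mod (i : ℕ) : c.σ (i % (2 * c.n)) = c.σ i := by
  induction i using Nat.strong_induction_on with
  | _ i ih =>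
    have hn : 0 < c.n := c.n_pos
    rcases lt_or_ge i (2 * c.n) with h | h
    · rw [Nat.mod_eq_of_lt h]
    · have e1 : i % (2 * c.n) = (i - 2 * c.n) % (2 * c.n) := Nat.mod_eq_sub_mod h
      have e2 : i = (i - 2 * c.n) + 2 * c.n := by omega
      rw [e1, ih (i - 2 * c.n) (by omega)]
      conv_rhs => rw [e2, c.periodic]

lemma sigZ_natCast (i : ℕ) : sigZ c (i : ℤ) = c.σ i := by
  unfold sigZ
  have hn : 0 < c.n := c.n_pos
  have : ((i : ℤ) % ((2 * c.n : ℕ) : ℤ)).toNat = i % (2 * c.n) := by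
    rw [← Int.natCast_mod, Int.toNat_natCast]
  rw [this, sigma_mod]

/-- Midpoint angle of arc number `sigZ m`. -/
def theta (m : ℤ) : ℝ := (2 * ((sigZ c m : ℕ) : ℝ) + 1) * π / k

lemma theta_add (m : ℤ) : theta c (m + (2 * c.n : ℕ)) = theta c m := by
  unfold theta; rw [sigZ_add]

/-- equator crossing times -/
def tFun (i : ℕ) : ℝ := π * i / c.n

/-- third coordinate (latitude) -/
def hF (s : ℝ) : ℝ := Real.sin (c.n * s) / 2

def xF (s : ℝ) : ℝ := c.n * s / π

def lngF (s : ℝ) : ℝ := interpFn (theta c) (xF c s)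

def rF (s : ℝ) : ℝ := Real.sqrt (1 - (hF c s) ^ 2)

def Fcur (s : ℝ) : E3 :=
  (WithLp.equiv 2 _).symm
    ![Real.cos (lngF c s) * rF c s, Real.sin (lngF c s) * rF c s, hF c s]

lemma Fcur_apply (s : ℝ) :
    (Fcur c s 0 = Real.cos (lngF c s) * rF c s) ∧
    (Fcur c s 1 = Real.sin (lngF c s) * rF c s) ∧
    (Fcur c s 2 = hF c s) := by
  refine ⟨?_, ?_, ?_⟩ <;> simp [Fcur, WithLp.equiv_symm_apply, PiLp.toLp_apply]

lemma hF_sq_le (s : ℝ) : (hF c s) ^ 2 ≤ 1 := by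
  have h1 := Real.neg_one_le_sin (c.n * s)
  have h2 := Real.sin_le_one (c.n * s)
  rw [hF]; nlinarith

lemma rF_sq (s : ℝ) : (rF c s) ^ 2 = 1 - (hF c s) ^ 2 := by
  rw [rF, Real.sq_sqrt (by linarith [hF_sq_le c s])]

lemma Fcur_mem_sphere (s : ℝ) : Fcur c s ∈ sphere2 := by
  simp only [sphere2, Metric.mem_sphere, dist_zero_right]
  rw [EuclideanSpace.norm_eq]
  rw [Real.sqrt_eq_one]
  simp only [Fcur, WithLp.equiv_symm_apply, PiLp.toLp_apply, Fin.sum_univ_three]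
  simp only [Matrix.cons_val_zero, Matrix.cons_val_one, Matrix.head_cons,
    Matrix.cons_val_two, Matrix.tail_cons]
  rw [Real.norm_eq_abs, Real.norm_eq_abs, Real.norm_eq_abs, sq_abs, sq_abs, sq_abs]
  have hr := rF_sq c s
  nlinarith [Real.sin_sq_add_cos_sq (lngF c s)]

/-- If `sin (n s) = 0` with witness integer `m`, the curve point is `eqPt (theta c m)`. -/
lemma Fcur_eq_eqPt {s : ℝ} {m : ℤ} (hm : (m : ℝ) * π = c.n * s) :
    Fcur c s = eqPt (theta c m) := by
  have hpi : (π : ℝ) ≠ 0 := Real.pi_ne_zero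
  have hx : xF c s = (m : ℝ) := by rw [xF, ← hm]; field_simp
  have hsin : Real.sin (c.n * s) = 0 := by rw [← hm]; exact Real.sin_int_mul_pi m
  have hh : hF c s = 0 := by rw [hF, hsin]; norm_num
  have hr : rF c s = 1 := by rw [rF, hh]; norm_num
  have hl : lngF c s = theta c m := by rw [lngF, hx, interpFn_intCast]
  rw [Fcur, eqPt, hl, hr, hh]
  norm_num

lemma theta_in_arc (hk : 0 < k) (m : ℤ) : eqPt (theta c m) ∈ arcSide k (sigZ c m) := by
  refine ⟨theta c m, ?_, ?_, rfl⟩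
  · rw [theta, div_lt_div_iff_of_pos_right (by exact_mod_cast hk)]
    have := Real.pi_pos; nlinarith
  · rw [theta, div_lt_div_iff_of_pos_right (by exact_mod_cast hk)]
    have := Real.pi_pos; nlinarith

lemma theta_ne_puncture (hk : 0 < k) (m : ℤ) (j : Fin k) :
    eqPt (theta c m) ≠ puncture k j := by
  intro h
  obtain ⟨l, hl⟩ := eqPt_inj h
  rw [theta] at hl
  have hπ : (π : ℝ) ≠ 0 := Real.pi_ne_zero
  have hkr : (k : ℝ) ≠ 0 := by exact_mod_cast hk.ne'
  set a : ℕ := (sigZ c m : ℕ)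
  have key : ((2 * (a : ℤ) + 1 - 2 * (j : ℤ) - 2 * (l * k) : ℤ) : ℝ) = 0 := by
    have h2 : (2 * (a : ℝ) + 1) * π / k - 2 * π * (j : ℝ) / k = 2 * π * l := hl
    field_simp at h2
    have h3 : π * (2 * (a : ℝ) + 1 - 2 * (j : ℝ)) = π * (2 * ((l : ℝ) * (k : ℝ))) := by
      rw [h2]; ring
    have h4 := mul_left_cancel₀ hπ h3
    push_cast
    linarith [h4]
  have hz : (2 * (a : ℤ) + 1 - 2 * (j : ℤ) - 2 * (l * k) : ℤ) = 0 := by exact_mod_cast key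
  have h5 : (2 : ℤ) ∣ 1 := ⟨(j : ℤ) + l * k - a, by linarith⟩
  norm_num at h5

lemma Fcur_not_puncture (hk : 0 < k) (s : ℝ) : Fcur c s ∉ Set.range (puncture k) := by
  rintro ⟨j, hj⟩
  have h2 : Fcur c s 2 = puncture k j 2 := by rw [hj]
  rw [(Fcur_apply c s).2.2] at h2
  rw [puncture, (eqPt_apply _).2.2] at h2
  have hsin : Real.sin (c.n * s) = 0 := by rw [hF] at h2; linarith
  obtain ⟨m, hm⟩ := Real.sin_eq_zero_iff.1 hsin
  exact theta_ne_puncture c hk m j ((Fcur_eq_eqPt c hm) ▸ hj.symm)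

lemma Fcur_mem (hk : 0 < k) (s : ℝ) : Fcur c s ∈ Pset k :=
  ⟨Fcur_mem_sphere c s, Fcur_not_puncture c hk s⟩



lemma continuous_hF : Continuous (hF c) := by unfold hF; fun_prop

lemma continuous_lngF : Continuous (lngF c) := by
  apply (continuous_interpFn (theta c)).comp
  unfold xF; fun_prop

lemma continuous_rF : Continuous (rF c) := by
  unfold rF
  exact Real.continuous_sqrt.comp (continuous_const.sub ((continuous_hF c).pow 2))

lemma continuous_Fcur : Continuous (Fcur c) := by
  unfold Fcur
  apply Continuous.comp
  · exact PiLp.continuous_toLp 2 _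
  · apply continuous_pi
    intro i
    fin_cases i
    · simp; exact (Real.continuous_cos.comp (continuous_lngF c)).mul (continuous_rF c)
    · simp; exact (Real.continuous_sin.comp (continuous_lngF c)).mul (continuous_rF c)
    · simpa using continuous_hF c

lemma lngF_periodic (s : ℝ) : lngF c (s + 2 * π) = lngF c s := by
  have hπ : (π : ℝ) ≠ 0 := Real.pi_ne_zero
  have hx : xF c (s + 2 * π) = xF c s + ((2 * c.n : ℕ) : ℤ) := by
    unfold xF; push_cast; field_simp
  unfold lngF interpFn
  rw [hx, Int.floor_add_intCast, Int.fract_add_intCast]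
  rw [show ⌊xF c s⌋ + ((2 * c.n : ℕ) : ℤ) + 1 = (⌊xF c s⌋ + 1) + ((2 * c.n : ℕ) : ℤ) by ring]
  rw [theta_add, theta_add]

lemma Fcur_periodic : Function.Periodic (Fcur c) (2 * π) := by
  intro s
  have hh : hF c (s + 2 * π) = hF c s := by
    unfold hF
    rw [show (c.n : ℝ) * (s + 2 * π) = c.n * s + c.n * (2 * π) by ring]
    rw [(Real.sin_periodic.nat_mul c.n) (c.n * s)]
  unfold Fcur rF
  rw [lngF_periodic, hh]

def Fsub (hk : 0 < k) (s : ℝ) : PSub k := ⟨Fcur c s, Fcur_mem c hk s⟩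

lemma Fsub_periodic (hk : 0 < k) : Function.Periodic (Fsub c hk) (2 * π) :=
  fun s => Subtype.ext (Fcur_periodic c s)

def Gmap (hk : 0 < k) : AddCircle (2 * π) → PSub k := (Fsub_periodic c hk).lift

lemma continuous_Gmap (hk : 0 < k) : Continuous (Gmap c hk) :=
  continuous_coinduced_dom.mpr ((continuous_Fcur c).subtype_mk _)

def gam (hk : 0 < k) : C(Circle, PSub k) :=
  ⟨fun z => Gmap c hk (AddCircle.homeomorphCircle'.symm z),
   (continuous_Gmap c hk).comp AddCircle.homeomorphCircle'.symm.continuous⟩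

lemma gam_exp (hk : 0 < k) (s : ℝ) : gam c hk (Circle.exp s) = Fsub c hk s := by
  show Gmap c hk (AddCircle.homeomorphCircle'.symm (Circle.exp s)) = _
  rw [← AddCircle.homeomorphCircle'_apply_mk, Homeomorph.symm_apply_apply]
  rfl

end Construction

/-- Every pillowcase code is realized, up to cyclic shift, as the pillowcase code of some
nice closed curve in the punctured sphere. -/
theorem stmt7 (k : ℕ) (hk : 3 ≤ k) (c : PillowCode k) :
    ∃ (γ : C(Circle, PSub k)) (t : ℕ → ℝ) (σ : ℕ → Fin k),
      IsNice k γ c.n t σ ∧ ∃ j, ∀ i, σ i = c.σ (i + j) := by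
  have hk0 : 0 < k := by omega
  have hn : 0 < c.n := c.n_pos
  have hπ := Real.pi_pos
  have hcn : (c.n : ℝ) ≠ 0 := Nat.cast_ne_zero.2 hn.ne'
  have hcnp : (0:ℝ) < c.n := Nat.cast_pos.2 hn
  refine ⟨gam c hk0, tFun c, c.σ, ?_, 0, fun i => by rw [Nat.add_zero]⟩
  refine { m_pos := c.n_pos, σ_periodic := c.periodic, adjacent := c.adjacent,
           mono := ?_, t_periodic := ?_, preimage := ?_, code := ?_, alternate := ?_ }
  · -- mono
    intro a b h
    unfold tFun
    rw [div_lt_div_iff_of_pos_right hcnp]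
    have : (a : ℝ) < b := Nat.cast_lt.2 h
    nlinarith
  · -- t_periodic
    intro i
    unfold tFun
    push_cast
    field_simp
  · -- preimage
    intro z
    constructor
    · intro hz
      obtain ⟨s, rfl⟩ : ∃ s, z = Circle.exp s := ⟨Complex.arg (z : ℂ), (Circle.exp_arg z).symm⟩
      rw [gam_exp] at hz
      have h2 : Fcur c s 2 = 0 := hz.2
      rw [(Fcur_apply c s).2.2, hF] at h2
      have hsin : Real.sin (c.n * s) = 0 := by linarith
      obtain ⟨m, hm⟩ := Real.sin_eq_zero_iff.1 hsin
      set r := m % ((2 * c.n : ℕ) : ℤ) with hrdef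
      set q := m / ((2 * c.n : ℕ) : ℤ) with hqdef
      have h2n : (0:ℤ) < ((2 * c.n : ℕ) : ℤ) := by positivity
      have hr0 : 0 ≤ r := Int.emod_nonneg m h2n.ne'
      have hmr : m = ((2 * c.n : ℕ) : ℤ) * q + r := (Int.mul_ediv_add_emod m _).symm
      refine ⟨r.toNat, ?_⟩
      have hrr : ((r.toNat : ℕ) : ℝ) = (r : ℝ) := by exact_mod_cast Int.toNat_of_nonneg hr0
      have hm2 : (c.n : ℝ) * s = 2 * (c.n:ℝ) * q * π + r * π := by
        rw [← hm]
        have : (m : ℝ) = 2 * (c.n:ℝ) * q + r := by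
          rw [show (m:ℝ) = (((2 * c.n : ℕ) : ℤ) * q + r : ℤ) by exact_mod_cast congrArg Int.cast hmr]
          push_cast
          ring
        rw [this]; ring
      have hs : s = tFun c r.toNat - ((-q : ℤ) : ℝ) * (2 * π) := by
        apply mul_left_cancel₀ hcn
        rw [tFun, hrr]
        push_cast
        field_simp
        linarith [hm2]
      rw [hs]
      exact Circle.periodic_exp.sub_int_mul_eq (-q)
    · rintro ⟨i, rfl⟩
      rw [gam_exp]
      refine ⟨Fcur_mem c hk0 _, ?_⟩
      show Fcur c (tFun c i) 2 = 0
      rw [(Fcur_apply c _).2.2, hF]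
      have : (c.n : ℝ) * tFun c i = i * π := by rw [tFun]; field_simp
      rw [this, Real.sin_nat_mul_pi]
      norm_num
  · -- code
    intro i
    rw [gam_exp]
    show Fcur c (tFun c i) ∈ arcSide k (c.σ i)
    have hm : (((i:ℤ)):ℝ) * π = c.n * tFun c i := by
      rw [tFun]; push_cast; field_simp
    rw [Fcur_eq_eqPt c hm]
    have := theta_in_arc c hk0 (i : ℤ)
    rwa [sigZ_natCast c i] at this
  · -- alternate
    refine ⟨true, fun i s h1 h2 => ?_⟩
    rw [gam_exp]
    have hns1 : (i:ℝ) * π < c.n * s := by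
      rw [tFun] at h1
      have := (div_lt_iff₀ hcnp).1 h1
      nlinarith
    have hns2 : c.n * s < (i:ℝ) * π + π := by
      rw [tFun] at h2
      have := (lt_div_iff₀ hcnp).1 h2
      push_cast at this
      nlinarith
    set x := c.n * s - i * π with hx
    have hx1 : 0 < x := by simp only [hx]; linarith
    have hx2 : x < π := by simp only [hx]; linarith
    have hsin : Real.sin (c.n * s) = (-1)^(i:ℕ) * Real.sin x := by
      rw [show (c.n:ℝ) * s = x + (i:ℤ) * π by push_cast; simp only [hx]; ring]
      rw [Real.sin_add_int_mul_pi]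
      norm_num
    have hspos := Real.sin_pos_of_pos_of_lt_pi hx1 hx2
    rcases Nat.even_or_odd i with he | ho
    · rw [if_pos he]
      show (0:ℝ) < Fcur c s 2
      rw [(Fcur_apply c s).2.2, hF, hsin, he.neg_one_pow]
      linarith
    · rw [if_neg (Nat.not_even_iff_odd.2 ho)]
      show Fcur c s 2 < 0
      rw [(Fcur_apply c s).2.2, hF, hsin, ho.neg_one_pow]
      linarith
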